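/- Let (p_n) be an increasing enumeration of the prime numbers and let P be the Puiseux monoid generated by {1/p_n : n ∈ ℕ}. Then P is atomic with set of atoms exactly {1/p_n : n ∈ ℕ}, but P is not a BF-monoid: the element 1 admits factorizations of unbounded length. -/

import Mathlib

/-- `a` is an atom of the additive submonoid `P`. -/
def IsAtomOf {K : Type*} [AddCommMonoid K] (P : AddSubmonoid K) (a : K) : Prop :=
  a ∈ P ∧ a ≠ 0 ∧ ∀ x ∈ P, ∀ y ∈ P, a = x + y → x = 0 ∨ y = 0

/-- `P` is atomic: every element is a finite sum of atoms. -/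
def IsAtomicMonoid {K : Type*} [AddCommMonoid K] (P : AddSubmonoid K) : Prop :=
  ∀ x ∈ P, ∃ s : Multiset K, (∀ a ∈ s, IsAtomOf P a) ∧ s.sum = x

/-- The set of factorizations of `x` into atoms of `P`. -/
def Factorizations {K : Type*} [AddCommMonoid K] (P : AddSubmonoid K) (x : K) :
    Set (Multiset K) :=
  {s | (∀ a ∈ s, IsAtomOf P a) ∧ s.sum = x}

/-- `P` is an FF-monoid. -/
def IsFFMonoid {K : Type*} [AddCommMonoid K] (P : AddSubmonoid K) : Prop :=
  IsAtomicMonoid P ∧ ∀ x ∈ P, (Factorizations P x).Finite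

/-- `P` is a BF-monoid. -/
def IsBFMonoid {K : Type*} [AddCommMonoid K] (P : AddSubmonoid K) : Prop :=
  IsAtomicMonoid P ∧ ∀ x ∈ P, {n : ℕ | ∃ s ∈ Factorizations P x, Multiset.card s = n}.Finite


lemma key_nat (p : ℕ → ℕ) (hinj : Function.Injective p) (hp : ∀ n, (p n).Prime)
    (A : Finset ℕ) (c : ℕ → ℕ) (m : ℕ) (hm : m ∈ A)
    (heq : ∑ n ∈ A, (c n : ℚ) / (p n : ℚ) = 1 / (p m : ℚ)) : c m ≠ 0 := by
  intro hc0
  have hpne : ∀ n, ((p n : ℚ)) ≠ 0 := fun n => Nat.cast_ne_zero.mpr (hp n).ne_zero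
  have hnat : ∑ n ∈ A, c n * ∏ k ∈ A.erase n, p k = ∏ k ∈ A.erase m, p k := by
    have hcast : ((∑ n ∈ A, c n * ∏ k ∈ A.erase n, p k : ℕ) : ℚ)
        = ((∏ k ∈ A.erase m, p k : ℕ) : ℚ) := by
      push_cast
      calc ∑ n ∈ A, (c n : ℚ) * ∏ k ∈ A.erase n, (p k : ℚ)
          = ∑ n ∈ A, ((c n : ℚ) / p n) * ∏ k ∈ A, (p k : ℚ) := by
            refine Finset.sum_congr rfl fun n hn => ?_
            rw [← Finset.mul_prod_erase A _ hn, div_mul_eq_mul_div, mul_left_comm,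
              mul_div_cancel_left₀ _ (hpne n)]
        _ = (∑ n ∈ A, (c n : ℚ) / p n) * ∏ k ∈ A, (p k : ℚ) := by
            rw [Finset.sum_mul]
        _ = (1 / (p m : ℚ)) * ∏ k ∈ A, (p k : ℚ) := by rw [heq]
        _ = ∏ k ∈ A.erase m, (p k : ℚ) := by
            rw [← Finset.mul_prod_erase A _ hm, one_div, inv_mul_eq_div,
              mul_div_cancel_left₀ _ (hpne m)]
    exact_mod_cast hcast
  rw [← Finset.add_sum_erase A _ hm, hc0, zero_mul, zero_add] at hnat
  have hdvd : p m ∣ ∏ k ∈ A.erase m, p k := by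
    rw [← hnat]
    refine Finset.dvd_sum fun n hn => ?_
    have hmn : m ∈ A.erase n :=
      Finset.mem_erase.mpr ⟨fun h => (Finset.mem_erase.mp hn).1 h.symm, hm⟩
    exact Dvd.dvd.mul_left (Finset.dvd_prod_of_mem _ hmn) _
  obtain ⟨k, hk, hdk⟩ := (Prime.dvd_finset_prod_iff (hp m).prime _).mp hdvd
  have : p m = p k := (Nat.prime_dvd_prime_iff_eq (hp m) (hp k)).mp hdk
  exact (Finset.mem_erase.mp hk).1 (hinj this.symm)

theorem reciprocals_of_primes_not_BF (p : ℕ → ℕ) (hmono : StrictMono p)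
    (hp : ∀ n, (p n).Prime) (hall : ∀ q : ℕ, q.Prime → ∃ n, p n = q)
    (P : AddSubmonoid ℚ)
    (hgen : AddSubmonoid.closure {x : ℚ | ∃ n : ℕ, x = 1 / (p n : ℚ)} = P) :
    IsAtomicMonoid P ∧
      {a | IsAtomOf P a} = {x : ℚ | ∃ n : ℕ, x = 1 / (p n : ℚ)} ∧
      ¬IsBFMonoid P ∧
      ∀ N : ℕ, ∃ s ∈ Factorizations P 1, N ≤ Multiset.card s := by
  set g : ℕ → ℚ := fun n => 1 / (p n : ℚ) with hg
  have hpinj : Function.Injective p := hmono.injective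
  have hppos : ∀ n, (0 : ℚ) < p n := fun n => by
    exact_mod_cast (hp n).pos
  have hgpos : ∀ n, 0 < g n := fun n => by
    simp only [hg, one_div, inv_pos]; exact hppos n
  have hgen_mem : ∀ n, g n ∈ P := fun n => by
    rw [← hgen]; exact AddSubmonoid.subset_closure ⟨n, rfl⟩
  -- multiset representation
  have hrep : ∀ x ∈ P, ∃ s : Multiset ℕ, (s.map g).sum = x := by
    intro x hx
    rw [← hgen] at hx
    induction hx using AddSubmonoid.closure_induction with
    | mem x hx => obtain ⟨n, rfl⟩ := hx; exact ⟨{n}, by simp [hg]⟩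
    | zero => exact ⟨0, by simp⟩
    | add x y _ _ hx hy =>
        obtain ⟨s, hs⟩ := hx; obtain ⟨t, ht⟩ := hy
        exact ⟨s + t, by rw [Multiset.map_add, Multiset.sum_add, hs, ht]⟩
  have hsum_mem : ∀ s : Multiset ℕ, (s.map g).sum ∈ P := by
    intro s
    induction s using Multiset.induction with
    | empty => simpa using P.zero_mem
    | cons a t ih => simpa using P.add_mem (hgen_mem a) ih
  have hnonneg : ∀ x ∈ P, 0 ≤ x := by
    intro x hx
    obtain ⟨s, rfl⟩ := hrep x hx
    refine Multiset.sum_nonneg fun y hy => ?_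
    obtain ⟨n, _, rfl⟩ := Multiset.mem_map.mp hy
    exact (hgpos n).le
  -- if m ∈ s then g m ≤ sum
  have hle : ∀ (s : Multiset ℕ) (m : ℕ), m ∈ s → g m ≤ (s.map g).sum := by
    intro s m hm
    obtain ⟨t, rfl⟩ := Multiset.exists_cons_of_mem hm
    rw [Multiset.map_cons, Multiset.sum_cons]
    have : 0 ≤ (t.map g).sum := by
      refine Multiset.sum_nonneg fun y hy => ?_
      obtain ⟨n, _, rfl⟩ := Multiset.mem_map.mp hy
      exact (hgpos n).le
    linarith
  -- each generator is an atom
  have hatom : ∀ m, IsAtomOf P (g m) := by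
    intro m
    refine ⟨hgen_mem m, (hgpos m).ne', ?_⟩
    intro x hx y hy hxy
    obtain ⟨s, hs⟩ := hrep x hx
    obtain ⟨t, ht⟩ := hrep y hy
    -- sum equation over a finset
    have hkey : (s + t).count m ≠ 0 := by
      set A : Finset ℕ := insert m (s + t).toFinset with hA
      have hmA : m ∈ A := Finset.mem_insert_self _ _
      refine key_nat p hpinj hp A (fun n => (s + t).count n) m hmA ?_
      have h1 : ∑ n ∈ A, ((s + t).count n : ℚ) / (p n : ℚ)
          = ∑ n ∈ (s + t).toFinset, ((s + t).count n : ℚ) / (p n : ℚ) := by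
        by_cases hmem : m ∈ (s + t).toFinset
        · rw [hA, Finset.insert_eq_self.mpr hmem]
        · rw [hA, Finset.sum_insert hmem]
          have : (s + t).count m = 0 := Multiset.count_eq_zero.mpr
            (fun h => hmem (Multiset.mem_toFinset.mpr h))
          rw [this]; simp
      rw [h1]
      have h2 : ((s + t).map g).sum = ∑ n ∈ (s + t).toFinset,
          ((s + t).count n : ℚ) / (p n : ℚ) := by
        rw [Finset.sum_multiset_map_count]
        refine Finset.sum_congr rfl fun n _ => ?_
        rw [nsmul_eq_mul, hg]
        ring
      rw [← h2, Multiset.map_add, Multiset.sum_add, hs, ht, ← hxy]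
    have hmor : m ∈ s ∨ m ∈ t := by
      by_contra hcon
      push_neg at hcon
      apply hkey
      rw [Multiset.count_add, Multiset.count_eq_zero.mpr hcon.1,
        Multiset.count_eq_zero.mpr hcon.2]
    rcases hmor with hms | hmt
    · right
      have : g m ≤ x := hs ▸ hle s m hms
      have hy0 : 0 ≤ y := hnonneg y hy
      linarith [hxy ▸ this]
    · left
      have : g m ≤ y := ht ▸ hle t m hmt
      have hx0 : 0 ≤ x := hnonneg x hx
      linarith [hxy ▸ this]
  have hatomic : IsAtomicMonoid P := by
    intro x hx
    obtain ⟨s, hs⟩ := hrep x hx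
    refine ⟨s.map g, fun a ha => ?_, hs⟩
    obtain ⟨n, _, rfl⟩ := Multiset.mem_map.mp ha
    exact hatom n
  refine ⟨hatomic, ?_, ?_, ?_⟩
  · ext a
    simp only [Set.mem_setOf_eq]
    constructor
    · rintro ⟨haP, hane, hsplit⟩
      obtain ⟨s, hs⟩ := hrep a haP
      rcases s.empty_or_exists_mem with h0 | ⟨k, hk⟩
      · exact absurd (by rw [← hs, h0]; simp) hane
      · obtain ⟨t, rfl⟩ := Multiset.exists_cons_of_mem hk
        rw [Multiset.map_cons, Multiset.sum_cons] at hs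
        rcases hsplit (g k) (hgen_mem k) ((t.map g).sum) (hsum_mem t) hs.symm with h | h
        · exact absurd h.symm (hgpos k).ne
        · exact ⟨k, by rw [← hs, h, add_zero]⟩
    · rintro ⟨n, rfl⟩; exact hatom n
  · rintro ⟨_, hfin⟩
    have h1P : (1 : ℚ) ∈ P := by
      have : ((Multiset.replicate (p 2) 2).map g).sum ∈ P := hsum_mem _
      rwa [Multiset.map_replicate, Multiset.sum_replicate, nsmul_eq_mul, hg,
        mul_one_div, div_self (hppos 2).ne'] at this
    have hsub : Set.range p ⊆ {n : ℕ | ∃ s ∈ Factorizations P 1, Multiset.card s = n} := by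
      rintro _ ⟨k, rfl⟩
      refine ⟨Multiset.replicate (p k) (g k), ⟨?_, ?_⟩, by simp⟩
      · intro a ha
        rw [Multiset.eq_of_mem_replicate ha]
        exact hatom k
      · rw [Multiset.sum_replicate, nsmul_eq_mul, hg, mul_one_div,
          div_self (hppos k).ne']
    exact (Set.infinite_range_of_injective hpinj).mono hsub (hfin 1 h1P)
  · intro N
    refine ⟨Multiset.replicate (p N) (g N), ⟨?_, ?_⟩, ?_⟩
    · intro a ha
      rw [Multiset.eq_of_mem_replicate ha]
      exact hatom N
    · rw [Multiset.sum_replicate, nsmul_eq_mul, hg, mul_one_div,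
        div_self (hppos N).ne']
    · rw [Multiset.card_replicate]
      exact (hmono.le_apply)
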